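/- Let K be an odd positive integer and let m be an even integer with 2 ≤ m ≤ K. For l ∈ {0,…,K} define h(l) = (1/C(K,m)) · ( Σ_{j=m/2+1}^{m} C(l,j)·C(K−l, m−j) + (1/2)·C(l, m/2)·C(K−l, m/2) ), and define γ_Sub : {0,…,K} → ℝ by γ_Sub(l) = 1 − 2h(l) for l ≤ (K−1)/2 and γ_Sub(l) = 1 − 2h(K−l) for l ≥ (K+1)/2. Then for every l ∈ {0,…,K}, γ_Sub(l)·1{l ≥ (K+1)/2} + (1 − γ_Sub(l))/2 = h(l). (In particular γ_Sub(l) = γ_Sub(K−l) for all l, so data-dependent randomized response with noise function γ_Sub outputs 1 with probability exactly h(l) conditioned on the sum of observed outcomes being l, matching the majority of m subsampled outcomes with ties broken by a fair coin.) -/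

import Mathlib

open Finset

lemma vander (K m l : ℕ) (hl : l ≤ K) :
    K.choose m = ∑ j ∈ Finset.range (m + 1), l.choose j * (K - l).choose (m - j) := by
  have : K = l + (K - l) := by omega
  rw [this, Nat.add_choose_eq, Finset.Nat.sum_antidiagonal_eq_sum_range_succ_mk]
  simp

lemma key (K m t l : ℕ) (hl : l ≤ K) (ht : m = 2 * t) (htp : 1 ≤ t) :
    (∑ j ∈ Finset.Icc (t + 1) m, l.choose j * (K - l).choose (m - j))
      + (∑ j ∈ Finset.Icc (t + 1) m, (K - l).choose j * l.choose (m - j))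
      + l.choose t * (K - l).choose t = K.choose m := by
  subst ht
  have hv := vander K (2 * t) l hl
  have hsplit : ∑ j ∈ Finset.range (2 * t + 1), l.choose j * (K - l).choose (2 * t - j)
      = (∑ j ∈ Finset.range t, l.choose j * (K - l).choose (2 * t - j))
        + l.choose t * (K - l).choose t
        + ∑ j ∈ Finset.Icc (t + 1) (2 * t), l.choose j * (K - l).choose (2 * t - j) := by
    rw [Finset.range_eq_Ico]
    rw [← Finset.sum_Ico_consecutive (fun j => l.choose j * (K - l).choose (2 * t - j))
      (show 0 ≤ t by omega) (show t ≤ 2 * t + 1 by omega),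
      ← Finset.sum_Ico_consecutive (fun j => l.choose j * (K - l).choose (2 * t - j))
      (show t ≤ t + 1 by omega) (show t + 1 ≤ 2 * t + 1 by omega)]
    have h1 : Finset.Ico t (t + 1) = {t} := by
      ext x; simp
    have h2 : Finset.Ico (t + 1) (2 * t + 1) = Finset.Icc (t + 1) (2 * t) := by
      ext x; simp
    have h3 : Finset.Ico 0 t = Finset.range t := by rw [Finset.range_eq_Ico]
    rw [h1, h2, h3, Finset.sum_singleton]
    have h4 : 2 * t - t = t := by omega
    rw [h4]
    omega
  have hrefl : ∑ j ∈ Finset.range t, l.choose j * (K - l).choose (2 * t - j)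
      = ∑ j ∈ Finset.Icc (t + 1) (2 * t), (K - l).choose j * l.choose (2 * t - j) := by
    refine Finset.sum_nbij' (fun j => 2 * t - j) (fun j => 2 * t - j) ?_ ?_ ?_ ?_ ?_
    · intro a ha; simp at ha ⊢; omega
    · intro a ha; simp at ha ⊢; omega
    · intro a ha; simp at ha; show 2 * t - (2 * t - a) = a; omega
    · intro a ha; simp at ha; show 2 * t - (2 * t - a) = a; omega
    · intro a ha
      simp at ha
      have : 2 * t - (2 * t - a) = a := by omega
      rw [this, Nat.mul_comm]
  rw [hv, hsplit, hrefl]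
  ring

theorem statement1 (K m : ℕ) (hK : Odd K) (hKpos : 0 < K)
    (hm : Even m) (hm2 : 2 ≤ m) (hmK : m ≤ K)
    (h γSub : ℕ → ℝ)
    (hh : ∀ l, h l = ((∑ j ∈ Finset.Icc (m / 2 + 1) m,
        (l.choose j : ℝ) * ((K - l).choose (m - j) : ℝ))
        + (1 / 2) * (l.choose (m / 2) : ℝ) * ((K - l).choose (m / 2) : ℝ))
        / (K.choose m : ℝ))
    (hγlo : ∀ l, l ≤ (K - 1) / 2 → γSub l = 1 - 2 * h l)
    (hγhi : ∀ l, (K + 1) / 2 ≤ l → γSub l = 1 - 2 * h (K - l)) :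
    ∀ l ≤ K, γSub l * (if (K + 1) / 2 ≤ l then (1 : ℝ) else 0)
      + (1 - γSub l) / 2 = h l := by
  intro l hl
  have hC : (0 : ℝ) < (K.choose m : ℝ) := by
    exact_mod_cast Nat.choose_pos hmK
  by_cases hcase : (K + 1) / 2 ≤ l
  · -- high case: need h l + h (K - l) = 1
    obtain ⟨t, ht⟩ := hm
    have ht2 : m = 2 * t := by omega
    have htp : 1 ≤ t := by omega
    have hmd : m / 2 = t := by omega
    have hk := key K m t l hl ht2 htp
    have hsym : h l + h (K - l) = 1 := by
      rw [hh l, hh (K - l)]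
      have hKl : K - (K - l) = l := by omega
      rw [hKl, hmd]
      rw [← add_div, div_eq_one_iff_eq (ne_of_gt hC)]
      push_cast [← hk]
      ring
    rw [if_pos hcase, hγhi l hcase]
    linarith
  · have hlo : l ≤ (K - 1) / 2 := by omega
    rw [if_neg hcase, hγlo l hlo]
    ring
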